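/- Let K be a nonempty compact subset of ℂ \ {0} and set ρ = 3π + max_{z ∈ K} |log|z||. If D is an open disc of radius 2π centred at a point ζ with Re ζ ≥ ρ, then K ⊆ exp(exp(D)). -/

import Mathlib

open Real Metric

theorem large_discs_blow_up (K : Set ℂ) (hK : IsCompact K) (hKne : K.Nonempty)
    (h0 : (0 : ℂ) ∉ K) (ζ : ℂ)
    (hζ : 3 * π + sSup ((fun z => |Real.log (‖z‖)|) '' K) ≤ ζ.re) :
    K ⊆ Complex.exp '' (Complex.exp '' ball ζ (2 * π)) := by
  intro z hz
  set M := sSup ((fun z => |Real.log (‖z‖)|) '' K) with hMdef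
  have hz0 : z ≠ 0 := fun h => h0 (h ▸ hz)
  -- M bounds |log |z||
  have hcont : ContinuousOn (fun z : ℂ => |Real.log (‖z‖)|) K := by
    apply ContinuousOn.abs
    apply Real.continuousOn_log.comp continuous_norm.continuousOn
    intro x hx
    simp only [Set.mem_compl_iff, Set.mem_singleton_iff]
    exact norm_ne_zero_iff.mpr (fun h => h0 (h ▸ hx))
  have hbdd : BddAbove ((fun z => |Real.log (‖z‖)|) '' K) :=
    (hK.image_of_continuousOn hcont).bddAbove
  have hLM : |Real.log (‖z‖)| ≤ M := le_csSup hbdd ⟨z, hz, rfl⟩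
  have hM0 : 0 ≤ M := le_trans (abs_nonneg _) hLM
  set L := Real.log (‖z‖) with hLdef
  set R := ζ.re with hRdef
  have hpi : (3 : ℝ) < π := by linarith [Real.pi_gt_three]
  have hR : 3 * π + M ≤ R := hζ
  set E := Real.exp (R - π) with hEdef
  have hE0 : 0 < E := Real.exp_pos _
  set θ := (Complex.log z).im with hθdef
  set k : ℤ := ⌈(E - θ) / (2 * π)⌉ with hkdef
  have h2pi : (0 : ℝ) < 2 * π := by linarith
  have hT1 : E ≤ θ + 2 * π * k := by
    have := Int.le_ceil ((E - θ) / (2 * π))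
    have h := (div_le_iff₀ h2pi).mp this
    linarith [h]
  have hT2 : θ + 2 * π * k ≤ E + 2 * π := by
    have := Int.ceil_lt_add_one ((E - θ) / (2 * π))
    have h : (k : ℝ) * (2 * π) < (E - θ) + 2 * π := by
      have := (mul_lt_mul_of_pos_right this h2pi)
      calc (k:ℝ) * (2*π) < ((E - θ) / (2*π) + 1) * (2*π) := this
        _ = (E - θ) + 2*π := by field_simp
    nlinarith
  set v : ℂ := Complex.log z + ((2 * π * k : ℝ) : ℂ) * Complex.I with hvdef
  have hvre : v.re = L := by simp [hvdef, Complex.log_re, hLdef]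
  have hvim : v.im = θ + 2 * π * k := by simp [hvdef, Complex.log_im, hθdef]
  have hvim_pos : 0 < v.im := by rw [hvim]; linarith
  have hv0 : v ≠ 0 := by
    intro h
    rw [h] at hvim_pos
    simp at hvim_pos
  -- exp v = z
  have hexpv : Complex.exp v = z := by
    rw [hvdef, Complex.exp_add, Complex.exp_log hz0]
    have : ((2 * π * k : ℝ) : ℂ) * Complex.I = (k : ℤ) * (2 * π * Complex.I) := by
      push_cast; ring
    rw [this, Complex.exp_int_mul_two_pi_mul_I, mul_one]
  set m : ℤ := round ((ζ.im - v.arg) / (2 * π)) with hmdef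
  set w : ℂ := Complex.log v + ((2 * π * m : ℝ) : ℂ) * Complex.I with hwdef
  have hexpw : Complex.exp w = v := by
    rw [hwdef, Complex.exp_add, Complex.exp_log hv0]
    have : ((2 * π * m : ℝ) : ℂ) * Complex.I = (m : ℤ) * (2 * π * Complex.I) := by
      push_cast; ring
    rw [this, Complex.exp_int_mul_two_pi_mul_I, mul_one]
  have hwre : w.re = Real.log (‖v‖) := by simp [hwdef, Complex.log_re]
  have hwim : w.im = v.arg + 2 * π * m := by simp [hwdef, Complex.log_im]
  -- bounds on |v|
  have habsv_pos : 0 < ‖v‖ := by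
    simpa [norm_pos_iff] using hv0
  have habsv_lb : E ≤ ‖v‖ := by
    calc E ≤ θ + 2 * π * k := hT1
      _ = v.im := hvim.symm
      _ ≤ |v.im| := le_abs_self _
      _ ≤ ‖v‖ := Complex.abs_im_le_norm v
  have habsv_ub : ‖v‖ ≤ M + E + 2 * π := by
    calc ‖v‖ ≤ |v.re| + |v.im| := Complex.norm_le_abs_re_add_abs_im v
      _ = |L| + |θ + 2 * π * k| := by rw [hvre, hvim]
      _ ≤ M + (E + 2 * π) := by
          apply add_le_add hLM
          rw [abs_of_pos (by linarith : (0:ℝ) < θ + 2 * π * k)]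
          exact hT2
      _ = M + E + 2 * π := by ring
  -- Re bounds for w
  have hre_lb : R - π ≤ w.re := by
    rw [hwre, Real.le_log_iff_exp_le habsv_pos]
    exact habsv_lb
  have hre_ub : w.re ≤ R + π := by
    rw [hwre, Real.log_le_iff_le_exp habsv_pos]
    -- M + E + 2π ≤ exp(R+π) = E * exp(2π)
    have h1 : Real.exp (R + π) = E * Real.exp (2 * π) := by
      rw [hEdef, ← Real.exp_add]; ring_nf
    have h2 : Real.exp (2 * π) * Real.exp M ≤ E := by
      rw [← Real.exp_add, hEdef]
      exact Real.exp_le_exp.mpr (by linarith)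
    have h3 : 1 + 2 * π ≤ Real.exp (2 * π) := by linarith [Real.add_one_le_exp (2*π)]
    have h4 : 1 + M ≤ Real.exp M := by linarith [Real.add_one_le_exp M]
    have h5 : (0:ℝ) < Real.exp (2*π) := Real.exp_pos _
    nlinarith [habsv_ub, Real.exp_pos M]
  -- Im bound for w
  have him : |w.im - ζ.im| ≤ π := by
    rw [hwim]
    have hr := abs_sub_round ((ζ.im - v.arg) / (2 * π))
    have : v.arg + 2 * π * m - ζ.im = -(2 * π * ((ζ.im - v.arg) / (2 * π) - m)) := by
      field_simp
      ring
    rw [this, abs_neg, abs_mul, abs_of_pos h2pi]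
    calc 2 * π * |(ζ.im - v.arg) / (2 * π) - ↑m| ≤ 2 * π * (1/2) :=
          mul_le_mul_of_nonneg_left hr (le_of_lt h2pi)
      _ = π := by ring
  -- w in ball
  have hball : w ∈ ball ζ (2 * π) := by
    rw [mem_ball, Complex.dist_eq]
    have hsq : (‖w - ζ‖)^2 = (w.re - R)^2 + (w.im - ζ.im)^2 := by
      rw [Complex.sq_norm, Complex.normSq_apply, Complex.sub_re, Complex.sub_im, hRdef]
      ring
    have h1 : |w.re - R| ≤ π := abs_le.mpr ⟨by linarith, by linarith⟩
    have h1' := abs_le.mp h1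
    have h2 : (w.re - R)^2 ≤ π^2 := sq_le_sq' (by linarith [h1'.1]) h1'.2
    have him' := abs_le.mp him
    have h3 : (w.im - ζ.im)^2 ≤ π^2 := sq_le_sq' (by linarith [him'.1]) him'.2
    have hlt : (‖w - ζ‖)^2 < (2*π)^2 := by
      rw [hsq]; nlinarith [Real.pi_pos]
    exact lt_of_pow_lt_pow_left₀ 2 (by linarith) hlt
  exact ⟨Complex.exp w, ⟨w, hball, rfl⟩, by rw [hexpw, hexpv]⟩
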